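/- Let a be a real number. Define ψ : (0, π/(2ω)) × ℝ^d → ℂ by ψ(t,x) = (cos ωt)^{−d/2} · exp{ (i·m·ω/(2ħ·sin ωt)) · [ −(1/cos ωt)·‖x − p·(a·sin ωt)/(mω) − I(0,t)‖² + ‖x‖²·cos ωt + 2 x·I(t,0) − 2 J(t,0) ] }. Then ψ satisfies the driven harmonic oscillator Schrödinger equation iħ·∂ψ/∂t + (ħ²/(2m))·Δ_x ψ − (1/2)·m·ω²·‖x‖²·ψ + (f(t)·x)·ψ = 0 at every point of (0, π/(2ω)) × ℝ^d, and for every x ∈ ℝ^d one has lim_{t→0⁺} ψ(t,x) = exp(i·a·(p·x)/ħ). -/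

import Mathlib

open scoped RealInnerProductSpace

/-- Directional derivative of a complex-valued function on `ℝ^d` along `v`. -/
noncomputable def dirDeriv {d : ℕ} (v : EuclideanSpace ℝ (Fin d))
    (g : EuclideanSpace ℝ (Fin d) → ℂ) (x : EuclideanSpace ℝ (Fin d)) : ℂ :=
  deriv (fun r : ℝ => g (x + r • v)) 0

/-- The Laplacian `Δg = ∑_{j=1}^d ∂²g/∂x_j²` of a complex-valued function on `ℝ^d`. -/
noncomputable def laplacian {d : ℕ} (g : EuclideanSpace ℝ (Fin d) → ℂ) :
    EuclideanSpace ℝ (Fin d) → ℂ :=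
  fun x => ∑ j : Fin d,
    dirDeriv (EuclideanSpace.single j (1 : ℝ))
      (dirDeriv (EuclideanSpace.single j (1 : ℝ)) g) x

/-- `I(u,v) = (1/(mω))·∫_v^u f(s)·sin(ω(s−v)) ds ∈ ℝ^d`. -/
noncomputable def Ivec {d : ℕ} (m ω : ℝ) (f : ℝ → EuclideanSpace ℝ (Fin d)) (u v : ℝ) :
    EuclideanSpace ℝ (Fin d) :=
  (1 / (m * ω)) • ∫ s in v..u, Real.sin (ω * (s - v)) • f s

/-- `J(u,v) = (1/(m²ω²))·∫_v^u ∫_v^s (f(s)·f(s'))·sin(ω(u−s))·sin(ω(s'−v)) ds' ds ∈ ℝ`. -/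
noncomputable def Jval {d : ℕ} (m ω : ℝ) (f : ℝ → EuclideanSpace ℝ (Fin d)) (u v : ℝ) : ℝ :=
  (1 / (m ^ 2 * ω ^ 2)) * ∫ s in v..u, ∫ s' in v..s,
    (⟪f s, f s'⟫ : ℝ) * Real.sin (ω * (u - s)) * Real.sin (ω * (s' - v))

-- auxiliary material
open scoped RealInnerProductSpace
open MeasureTheory intervalIntegral

section Aux
variable {V : Type*} [NormedAddCommGroup V] [NormedSpace ℝ V] [CompleteSpace V]

lemma hasDerivAt_primitive {g : ℝ → V} (hg : Continuous g) (t : ℝ) :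
    HasDerivAt (fun u => ∫ s in (0:ℝ)..u, g s) (g t) t :=
  intervalIntegral.integral_hasDerivAt_right (hg.intervalIntegrable _ _)
    (hg.stronglyMeasurableAtFilter _ _) hg.continuousAt

lemma continuous_primitive' {g : ℝ → V} (hg : Continuous g) :
    Continuous (fun u => ∫ s in (0:ℝ)..u, g s) :=
  continuous_iff_continuousAt.2 fun t => (hasDerivAt_primitive hg t).continuousAt

end Aux

variable {d : ℕ} (ω : ℝ) (f : ℝ → EuclideanSpace ℝ (Fin d))

noncomputable def Sv (t : ℝ) : EuclideanSpace ℝ (Fin d) :=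
  ∫ s in (0:ℝ)..t, Real.sin (ω * s) • f s

noncomputable def Fv (t : ℝ) : EuclideanSpace ℝ (Fin d) :=
  ∫ s in (0:ℝ)..t, Real.cos (ω * s) • f s

noncomputable def Av (t : ℝ) : ℝ :=
  ∫ s in (0:ℝ)..t, Real.cos (ω * s) * ⟪f s, Sv ω f s⟫

variable {ω f}

lemma cont_sinf (hf : Continuous f) : Continuous fun s => Real.sin (ω * s) • f s := by
  fun_prop
lemma cont_cosf (hf : Continuous f) : Continuous fun s => Real.cos (ω * s) • f s := by
  fun_prop

lemma hasDerivAt_Sv (hf : Continuous f) (t : ℝ) :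
    HasDerivAt (Sv ω f) (Real.sin (ω * t) • f t) t :=
  hasDerivAt_primitive (cont_sinf hf) t

lemma hasDerivAt_Fv (hf : Continuous f) (t : ℝ) :
    HasDerivAt (Fv ω f) (Real.cos (ω * t) • f t) t :=
  hasDerivAt_primitive (cont_cosf hf) t

lemma continuous_Sv (hf : Continuous f) : Continuous (Sv ω f) :=
  continuous_primitive' (cont_sinf hf)

lemma cont_Aint (hf : Continuous f) :
    Continuous fun s => Real.cos (ω * s) * (⟪f s, Sv ω f s⟫ : ℝ) := by
  exact (Real.continuous_cos.comp (continuous_const.mul continuous_id)).mul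
    (hf.inner (continuous_Sv hf))

lemma hasDerivAt_Av (hf : Continuous f) (t : ℝ) :
    HasDerivAt (Av ω f) (Real.cos (ω * t) * ⟪f t, Sv ω f t⟫) t :=
  hasDerivAt_primitive (cont_Aint hf) t

-- B̃ identity
lemma Bt_eq (hf : Continuous f) (t : ℝ) :
    (∫ s in (0:ℝ)..t, Real.sin (ω * s) * ⟪f s, Sv ω f s⟫) = ‖Sv ω f t‖ ^ 2 / 2 := by
  have hcont : Continuous fun s => Real.sin (ω * s) * (⟪f s, Sv ω f s⟫ : ℝ) := by
    exact (Real.continuous_sin.comp (continuous_const.mul continuous_id)).mul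
      (hf.inner (continuous_Sv hf))
  have key : ∀ u : ℝ, HasDerivAt (fun u => ‖Sv ω f u‖ ^ 2 / 2)
      (Real.sin (ω * u) * ⟪f u, Sv ω f u⟫) u := by
    intro u
    have h1 : HasDerivAt (fun u => (⟪Sv ω f u, Sv ω f u⟫ : ℝ) / 2)
        ((⟪Sv ω f u, Real.sin (ω * u) • f u⟫ + ⟪Real.sin (ω * u) • f u, Sv ω f u⟫) / 2) u :=
      ((hasDerivAt_Sv hf u).inner ℝ (hasDerivAt_Sv hf u)).div_const 2
    have h2 : (⟪Sv ω f u, Real.sin (ω * u) • f u⟫ + ⟪Real.sin (ω * u) • f u, Sv ω f u⟫ : ℝ) / 2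
        = Real.sin (ω * u) * ⟪f u, Sv ω f u⟫ := by
      rw [real_inner_smul_left, real_inner_smul_right, real_inner_comm (Sv ω f u) (f u)]
      ring
    simpa only [real_inner_self_eq_norm_sq, h2] using h1
  rw [intervalIntegral.integral_eq_sub_of_hasDerivAt (fun u _ => key u)
    (hcont.intervalIntegrable _ _)]
  simp [Sv]

lemma Ivec_t0 (m : ℝ) (t : ℝ) : Ivec m ω f t 0 = (1 / (m * ω)) • Sv ω f t := by
  simp [Ivec, Sv]

lemma Ivec_0t (hf : Continuous f) (m : ℝ) (t : ℝ) :
    Ivec m ω f 0 t = (1 / (m * ω)) •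
      (Real.sin (ω * t) • Fv ω f t - Real.cos (ω * t) • Sv ω f t) := by
  have h1 : (∫ s in t..(0:ℝ), Real.sin (ω * (s - t)) • f s)
      = -∫ s in (0:ℝ)..t, Real.sin (ω * (s - t)) • f s := by
    rw [intervalIntegral.integral_symm]
  have h2 : (∫ s in (0:ℝ)..t, Real.sin (ω * (s - t)) • f s)
      = Real.cos (ω * t) • Sv ω f t - Real.sin (ω * t) • Fv ω f t := by
    have hpt : ∀ s : ℝ, Real.sin (ω * (s - t)) • f s
        = Real.cos (ω * t) • (Real.sin (ω * s) • f s)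
          - Real.sin (ω * t) • (Real.cos (ω * s) • f s) := by
      intro s
      rw [mul_sub, Real.sin_sub, sub_smul, smul_smul, smul_smul]
      congr 1
      · congr 1; ring
      · congr 1; ring
    simp_rw [hpt]
    rw [intervalIntegral.integral_sub
        (show IntervalIntegrable (fun s => Real.cos (ω * t) • (Real.sin (ω * s) • f s)) volume 0 t
          from ((cont_sinf hf).const_smul (Real.cos (ω * t))).intervalIntegrable _ _)
        (show IntervalIntegrable (fun s => Real.sin (ω * t) • (Real.cos (ω * s) • f s)) volume 0 t
          from ((cont_cosf hf).const_smul (Real.sin (ω * t))).intervalIntegrable _ _),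
      intervalIntegral.integral_smul, intervalIntegral.integral_smul]
    rfl
  rw [Ivec, h1, h2]
  rw [neg_sub]

lemma Jval_t0 (hf : Continuous f) (m : ℝ) (t : ℝ) :
    Jval m ω f t 0 = (1 / (m ^ 2 * ω ^ 2)) *
      (Real.sin (ω * t) * Av ω f t - Real.cos (ω * t) * (‖Sv ω f t‖ ^ 2 / 2)) := by
  have hinner : ∀ s : ℝ, (∫ s' in (0:ℝ)..s,
      (⟪f s, f s'⟫ : ℝ) * Real.sin (ω * (t - s)) * Real.sin (ω * (s' - 0)))
      = Real.sin (ω * (t - s)) * ⟪f s, Sv ω f s⟫ := by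
    intro s
    have : ∀ s' : ℝ, (⟪f s, f s'⟫ : ℝ) * Real.sin (ω * (t - s)) * Real.sin (ω * (s' - 0))
        = Real.sin (ω * (t - s)) * ⟪f s, Real.sin (ω * s') • f s'⟫ := by
      intro s'
      rw [real_inner_smul_right]
      ring_nf
    simp_rw [this]
    rw [intervalIntegral.integral_const_mul]
    congr 1
    rw [Sv]
    exact (innerSL ℝ (f s)).intervalIntegral_comp_comm
      ((cont_sinf hf).intervalIntegrable _ _)
  have houter : (∫ s in (0:ℝ)..t, Real.sin (ω * (t - s)) * (⟪f s, Sv ω f s⟫ : ℝ))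
      = Real.sin (ω * t) * Av ω f t - Real.cos (ω * t) * (‖Sv ω f t‖ ^ 2 / 2) := by
    have hpt : ∀ s : ℝ, Real.sin (ω * (t - s)) * (⟪f s, Sv ω f s⟫ : ℝ)
        = Real.sin (ω * t) * (Real.cos (ω * s) * ⟪f s, Sv ω f s⟫)
          - Real.cos (ω * t) * (Real.sin (ω * s) * ⟪f s, Sv ω f s⟫) := by
      intro s
      rw [mul_sub, Real.sin_sub]
      ring
    simp_rw [hpt]
    have hc1 : Continuous fun s => Real.cos (ω * s) * (⟪f s, Sv ω f s⟫ : ℝ) :=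
      (Real.continuous_cos.comp (continuous_const.mul continuous_id)).mul
        (hf.inner (continuous_Sv hf))
    have hc2 : Continuous fun s => Real.sin (ω * s) * (⟪f s, Sv ω f s⟫ : ℝ) :=
      (Real.continuous_sin.comp (continuous_const.mul continuous_id)).mul
        (hf.inner (continuous_Sv hf))
    rw [intervalIntegral.integral_sub ((hc1.intervalIntegrable _ _).const_mul _)
        ((hc2.intervalIntegrable _ _).const_mul _),
      intervalIntegral.integral_const_mul, intervalIntegral.integral_const_mul,
      Bt_eq hf]
    rfl
  rw [Jval]
  simp_rw [hinner]
  rw [houter]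
lemma bracket_scalar (s c m ω hb a X P PS NG GS NS A : ℝ)
    (hs : s ≠ 0) (hc : c ≠ 0) (hm : m ≠ 0) (hω : ω ≠ 0) (hh : hb ≠ 0)
    (hpyth : s ^ 2 + c ^ 2 = 1) :
    (m * ω / (2 * hb * s)) *
      ( -(1/c) * (X - 2 * ((1/(m*ω)) * (s*P - c*PS))
            + (1/(m*ω))^2 * (s^2*NG - 2*s*c*GS + c^2*NS))
        + X * c + 2 * ((1/(m*ω)) * PS)
        - 2 * ((1/(m^2*ω^2)) * (s*A - c*(NS/2))) )
    = -(m*ω/(2*hb)) * (s/c) * X + (1/(hb*c)) * P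
      - (1/(2*hb*m*ω)) * (s*NG/c - 2*GS + 2*A) := by
  field_simp
  ring_nf
  linear_combination (m^2 * ω^2 * X) * hpyth

lemma norm_sub_comb {d : ℕ} (x G S : EuclideanSpace ℝ (Fin d)) (r s c : ℝ) :
    ‖x - r • (s • G - c • S)‖ ^ 2 =
      ‖x‖ ^ 2 - 2 * (r * (s * ⟪x, G⟫ - c * ⟪x, S⟫))
        + r ^ 2 * (s ^ 2 * ‖G‖ ^ 2 - 2 * (s * (c * ⟪G, S⟫)) + c ^ 2 * ‖S‖ ^ 2) := by
  have h1 := norm_sub_sq_real x (r • (s • G - c • S))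
  have h2 := norm_sub_sq_real (s • G) (c • S)
  rw [norm_smul] at h1
  rw [norm_smul, norm_smul] at h2
  simp only [inner_sub_right, inner_sub_left, real_inner_smul_right, real_inner_smul_left,
    mul_pow, sq_abs, Real.norm_eq_abs] at h1 h2 ⊢
  rw [h1, h2, real_inner_comm S G]
  ring

variable (hbar m a : ℝ) (p : EuclideanSpace ℝ (Fin d))

noncomputable def Gv (ω : ℝ) (f : ℝ → EuclideanSpace ℝ (Fin d)) (a : ℝ)
    (p : EuclideanSpace ℝ (Fin d)) (t : ℝ) : EuclideanSpace ℝ (Fin d) :=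
  a • p + Fv ω f t

noncomputable def phase (hbar m ω : ℝ) (f : ℝ → EuclideanSpace ℝ (Fin d)) (a : ℝ)
    (p : EuclideanSpace ℝ (Fin d)) (t : ℝ) (x : EuclideanSpace ℝ (Fin d)) : ℝ :=
  -(m * ω / (2 * hbar)) * (Real.sin (ω * t) / Real.cos (ω * t)) * ‖x‖ ^ 2
    + (1 / (hbar * Real.cos (ω * t))) * ⟪x, Gv ω f a p t⟫
    - (1 / (2 * hbar * m * ω)) *
        (Real.sin (ω * t) * ‖Gv ω f a p t‖ ^ 2 / Real.cos (ω * t)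
          - 2 * ⟪Gv ω f a p t, Sv ω f t⟫ + 2 * Av ω f t)

lemma bracket_eq (hf : Continuous f) (t : ℝ) (x : EuclideanSpace ℝ (Fin d))
    (hs : Real.sin (ω * t) ≠ 0) (hc : Real.cos (ω * t) ≠ 0)
    (hm : m ≠ 0) (hω : ω ≠ 0) (hh : hbar ≠ 0) :
    (m * ω / (2 * hbar * Real.sin (ω * t))) *
      (-(1 / Real.cos (ω * t))
          * ‖x - ((a * Real.sin (ω * t)) / (m * ω)) • p - Ivec m ω f 0 t‖ ^ 2
        + ‖x‖ ^ 2 * Real.cos (ω * t)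
        + 2 * (⟪x, Ivec m ω f t 0⟫ : ℝ)
        - 2 * Jval m ω f t 0) = phase hbar m ω f a p t x := by
  set s := Real.sin (ω * t)
  set c := Real.cos (ω * t)
  have hx : x - ((a * s) / (m * ω)) • p - Ivec m ω f 0 t
      = x - (1 / (m * ω)) • (s • Gv ω f a p t - c • Sv ω f t) := by
    rw [Ivec_0t hf m t, Gv]
    match_scalars <;> field_simp <;> ring_nf
    all_goals rfl
  rw [hx, Ivec_t0, norm_sub_comb, real_inner_smul_right, Jval_t0 hf]
  have h := bracket_scalar s c m ω hbar a (‖x‖ ^ 2) (⟪x, Gv ω f a p t⟫ : ℝ)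
    (⟪x, Sv ω f t⟫ : ℝ) (‖Gv ω f a p t‖ ^ 2) (⟪Gv ω f a p t, Sv ω f t⟫ : ℝ)
    (‖Sv ω f t‖ ^ 2) (Av ω f t) hs hc hm hω hh (Real.sin_sq_add_cos_sq (ω * t))
  rw [phase]
  linear_combination h


section Lap
variable {d : ℕ} (A0 : ℂ) (α γ0 : ℝ) (β : EuclideanSpace ℝ (Fin d))

noncomputable def gauss (y : EuclideanSpace ℝ (Fin d)) : ℂ :=
  A0 * Complex.exp (Complex.I * ((α * ‖y‖ ^ 2 + ⟪y, β⟫ + γ0 : ℝ) : ℂ))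

lemma exponent_expand (y : EuclideanSpace ℝ (Fin d)) (j : Fin d) (r : ℝ) :
    α * ‖y + r • EuclideanSpace.single j (1:ℝ)‖ ^ 2
      + ⟪y + r • EuclideanSpace.single j (1:ℝ), β⟫ + γ0
    = (α * ‖y‖ ^ 2 + ⟪y, β⟫ + γ0) + (2 * α * y j + β j) * r + α * r ^ 2 := by
  have h1 : ‖y + r • EuclideanSpace.single j (1:ℝ)‖ ^ 2
      = ‖y‖ ^ 2 + 2 * (r * y j) + r ^ 2 := by
    rw [norm_add_sq_real, real_inner_smul_right, EuclideanSpace.inner_single_right,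
      norm_smul, EuclideanSpace.norm_single]
    simp [mul_pow, sq_abs]
  have h2 : (⟪y + r • EuclideanSpace.single j (1:ℝ), β⟫ : ℝ) = ⟪y, β⟫ + r * β j := by
    rw [inner_add_left, real_inner_smul_left, EuclideanSpace.inner_single_left]
    simp
  rw [h1, h2]; ring

lemma hasDerivAt_gauss_line (y : EuclideanSpace ℝ (Fin d)) (j : Fin d) :
    HasDerivAt (fun r : ℝ => gauss A0 α γ0 β (y + r • EuclideanSpace.single j (1:ℝ)))
      (Complex.I * ((2 * α * y j + β j : ℝ) : ℂ) * gauss A0 α γ0 β y) 0 := by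
  have hq : HasDerivAt (fun r : ℝ => (α * ‖y‖ ^ 2 + ⟪y, β⟫ + γ0)
      + (2 * α * y j + β j) * r + α * r ^ 2) (2 * α * y j + β j) 0 := by
    have h := (((hasDerivAt_id (0:ℝ)).const_mul (2 * α * y j + β j)).const_add
      (α * ‖y‖ ^ 2 + ⟪y, β⟫ + γ0)).add ((hasDerivAt_pow 2 (0:ℝ)).const_mul α)
    exact h.congr_deriv (by simp)
  have h2 : HasDerivAt (fun r : ℝ => gauss A0 α γ0 β (y + r • EuclideanSpace.single j (1:ℝ)))
      (A0 * (Complex.I * ((2 * α * y j + β j : ℝ) : ℂ)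
        * Complex.exp (Complex.I * ((α * ‖y‖ ^ 2 + ⟪y, β⟫ + γ0 : ℝ) : ℂ)))) 0 := by
    have h3 := ((hq.ofReal_comp.const_mul Complex.I).cexp).const_mul A0
    simp only [gauss, exponent_expand]
    refine h3.congr_deriv ?_
    push_cast
    ring
  convert h2 using 1
  rw [gauss]; ring

lemma dirDeriv_gauss (y : EuclideanSpace ℝ (Fin d)) (j : Fin d) :
    dirDeriv (EuclideanSpace.single j (1:ℝ)) (gauss A0 α γ0 β) y
      = Complex.I * ((2 * α * y j + β j : ℝ) : ℂ) * gauss A0 α γ0 β y :=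
  (hasDerivAt_gauss_line A0 α γ0 β y j).deriv

lemma laplacian_gauss (x : EuclideanSpace ℝ (Fin d)) :
    laplacian (gauss A0 α γ0 β) x
      = (2 * Complex.I * (α : ℂ) * (d : ℂ)
          - ((4 * α ^ 2 * ‖x‖ ^ 2 + 4 * α * ⟪x, β⟫ + ‖β‖ ^ 2 : ℝ) : ℂ))
        * gauss A0 α γ0 β x := by
  have hsecond : ∀ j : Fin d,
      dirDeriv (EuclideanSpace.single j (1:ℝ))
        (dirDeriv (EuclideanSpace.single j (1:ℝ)) (gauss A0 α γ0 β)) x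
      = (2 * Complex.I * α - ((2 * α * x j + β j : ℝ) : ℂ) ^ 2) * gauss A0 α γ0 β x := by
    intro j
    have happ : ∀ r : ℝ, (x + r • EuclideanSpace.single j (1:ℝ)) j = x j + r := by
      intro r
      simp [EuclideanSpace.single_apply]
    rw [dirDeriv]
    have hfun : (fun r : ℝ => dirDeriv (EuclideanSpace.single j (1:ℝ)) (gauss A0 α γ0 β)
          (x + r • EuclideanSpace.single j (1:ℝ)))
        = fun r : ℝ => Complex.I * ((2 * α * (x j + r) + β j : ℝ) : ℂ)
            * gauss A0 α γ0 β (x + r • EuclideanSpace.single j (1:ℝ)) := by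
      funext r
      rw [dirDeriv_gauss, happ]
    rw [hfun]
    have hlin : HasDerivAt (fun r : ℝ => Complex.I * ((2 * α * (x j + r) + β j : ℝ) : ℂ))
        (Complex.I * (2 * α : ℂ)) 0 := by
      have : HasDerivAt (fun r : ℝ => ((2 * α * (x j + r) + β j : ℝ) : ℂ)) ((2 * α : ℝ) : ℂ) 0 := by
        have hr : HasDerivAt (fun r : ℝ => 2 * α * (x j + r) + β j) (2 * α) 0 := by
          simpa using (((hasDerivAt_id (0:ℝ)).const_add (x j)).const_mul (2 * α)).add_const (β j)
        exact hr.ofReal_comp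
      simpa using this.const_mul Complex.I
    have hprod : HasDerivAt (fun r : ℝ => Complex.I * ((2 * α * (x j + r) + β j : ℝ) : ℂ)
        * gauss A0 α γ0 β (x + r • EuclideanSpace.single j (1:ℝ))) _ 0 :=
      hlin.mul (hasDerivAt_gauss_line A0 α γ0 β x j)
    rw [hprod.deriv]
    simp only [add_zero, zero_smul]
    push_cast
    linear_combination (4*(α:ℂ)*(x j)*(β j) + 4*(α:ℂ)^2*(x j)^2 + ((β j):ℂ)^2)
      * (gauss A0 α γ0 β x) * Complex.I_sq
  rw [laplacian]
  simp only [hsecond]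
  rw [← Finset.sum_mul]
  congr 1
  have hsum : ∑ j : Fin d, ((2 * α * x j + β j) ^ 2 : ℝ)
      = 4 * α ^ 2 * ‖x‖ ^ 2 + 4 * α * ⟪x, β⟫ + ‖β‖ ^ 2 := by
    have hx2 : (‖x‖ ^ 2 : ℝ) = ∑ j : Fin d, x j * x j := by
      rw [← real_inner_self_eq_norm_sq, PiLp.inner_apply]; rfl
    have hb2 : (‖β‖ ^ 2 : ℝ) = ∑ j : Fin d, β j * β j := by
      rw [← real_inner_self_eq_norm_sq, PiLp.inner_apply]; rfl
    have hxb : (⟪x, β⟫ : ℝ) = ∑ j : Fin d, x j * β j := by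
      rw [PiLp.inner_apply]; simp [mul_comm]
    rw [hx2, hb2, hxb, Finset.mul_sum, Finset.mul_sum, ← Finset.sum_add_distrib,
      ← Finset.sum_add_distrib]
    congr 1; funext j; ring
  rw [Finset.sum_sub_distrib]
  push_cast [← hsum]
  simp [Finset.sum_const]
  ring
end Lap

section Derivs
variable {d : ℕ} {ω : ℝ} {f : ℝ → EuclideanSpace ℝ (Fin d)} {hbar m a : ℝ}
  {p : EuclideanSpace ℝ (Fin d)}

lemma hasDerivAt_sin_omega (t : ℝ) :
    HasDerivAt (fun u => Real.sin (ω * u)) (ω * Real.cos (ω * t)) t := by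
  simpa [mul_comm, Function.comp_def] using (Real.hasDerivAt_sin (ω * t)).comp t ((hasDerivAt_id t).const_mul ω)

lemma hasDerivAt_cos_omega (t : ℝ) :
    HasDerivAt (fun u => Real.cos (ω * u)) (-(ω * Real.sin (ω * t))) t := by
  simpa [mul_comm, Function.comp_def] using (Real.hasDerivAt_cos (ω * t)).comp t ((hasDerivAt_id t).const_mul ω)

lemma hasDerivAt_Gv (hf : Continuous f) (t : ℝ) :
    HasDerivAt (Gv ω f a p) (Real.cos (ω * t) • f t) t := by
  have : (Gv ω f a p) = fun u => a • p + Fv ω f u := by funext u; rw [Gv]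
  rw [this]
  exact (hasDerivAt_Fv hf t).const_add (a • p)

lemma hasDerivAt_phase (hf : Continuous f) (x : EuclideanSpace ℝ (Fin d)) (t : ℝ)
    (hs2 : Real.sin (ω * t) ≠ 0)
    (hc : Real.cos (ω * t) ≠ 0) (hm : m ≠ 0) (hω : ω ≠ 0) (hh : hbar ≠ 0) :
    HasDerivAt (fun u => phase hbar m ω f a p u x)
      (-(m * ω ^ 2 / (2 * hbar * Real.cos (ω * t) ^ 2)) * ‖x‖ ^ 2
        + (ω * Real.sin (ω * t) / (hbar * Real.cos (ω * t) ^ 2)) * ⟪x, Gv ω f a p t⟫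
        + ⟪x, f t⟫ / hbar
        - ‖Gv ω f a p t‖ ^ 2 / (2 * hbar * m * Real.cos (ω * t) ^ 2)) t := by
  have hG := hasDerivAt_Gv (ω := ω) (a := a) (p := p) hf t
  have hS := hasDerivAt_Sv (ω := ω) hf t
  have hsin := hasDerivAt_sin_omega (ω := ω) t
  have hcos := hasDerivAt_cos_omega (ω := ω) t
  have h1 := ((hsin.div hcos hc).const_mul (-(m * ω / (2 * hbar)))).mul_const (‖x‖ ^ 2)
  have hP := (hasDerivAt_const t x).inner ℝ hG
  have hr := (hasDerivAt_const t (1:ℝ)).div (hcos.const_mul hbar)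
    (by exact mul_ne_zero hh hc)
  have h2 := hr.mul hP
  have hNG : HasDerivAt (fun u => ‖Gv ω f a p u‖ ^ 2)
      (⟪Gv ω f a p t, Real.cos (ω * t) • f t⟫ + ⟪Real.cos (ω * t) • f t, Gv ω f a p t⟫) t := by
    simpa only [real_inner_self_eq_norm_sq] using hG.inner ℝ hG
  have hsng := ((hsin.mul hNG).div hcos hc)
  have hGS := hG.inner ℝ hS
  have hAv := hasDerivAt_Av (ω := ω) hf t
  have h3 := ((hsng.sub (hGS.const_mul 2)).add (hAv.const_mul 2)).const_mul
    (1 / (2 * hbar * m * ω))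
  have htot := (h1.add h2).sub h3
  have hfun : (fun u => phase hbar m ω f a p u x)
      = fun u => -(m * ω / (2 * hbar)) * (Real.sin (ω * u) / Real.cos (ω * u)) * ‖x‖ ^ 2
        + 1 / (hbar * Real.cos (ω * u)) * ⟪x, Gv ω f a p u⟫
        - 1 / (2 * hbar * m * ω) *
            (Real.sin (ω * u) * ‖Gv ω f a p u‖ ^ 2 / Real.cos (ω * u)
              - 2 * ⟪Gv ω f a p u, Sv ω f u⟫ + 2 * Av ω f u) := by
    funext u; rw [phase]
  rw [hfun]
  refine htot.congr_deriv ?_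
  symm
  simp only [Pi.div_apply, Pi.mul_apply, inner_zero_left, real_inner_smul_right, real_inner_smul_left, add_zero, zero_add,
    real_inner_comm (Sv ω f t) (f t), real_inner_comm (Gv ω f a p t) (f t)]
  have hpyth := Real.sin_sq_add_cos_sq (ω * t)
  field_simp
  ring_nf
  linear_combination (ω * ‖Gv ω f a p t‖ ^ 2
    + m ^ 2 * ω ^ 3 * ‖x‖ ^ 2) * hpyth

end Derivs

noncomputable def cleanPsi {d : ℕ} (hbar m ω : ℝ) (f : ℝ → EuclideanSpace ℝ (Fin d))
    (a : ℝ) (p : EuclideanSpace ℝ (Fin d)) (t : ℝ) (x : EuclideanSpace ℝ (Fin d)) : ℂ :=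
  ((Real.cos (ω * t) ^ (-(d : ℝ) / 2) : ℝ) : ℂ)
    * Complex.exp (Complex.I * ((phase hbar m ω f a p t x : ℝ) : ℂ))


/-- Fix `ħ > 0`, `m > 0`, `ω > 0`, `d ≥ 1`, `p ∈ ℝ^d`, a continuous
`f : ℝ → ℝ^d` and a real `a`.  The function
`ψ(t,x) = (cos ωt)^{−d/2}·exp{(imω/(2ħ sin ωt))·[−(1/cos ωt)‖x − p(a sin ωt)/(mω) − I(0,t)‖²
+ ‖x‖² cos ωt + 2x·I(t,0) − 2J(t,0)]}` satisfies the driven harmonic oscillator Schrödinger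
equation on `(0, π/(2ω)) × ℝ^d`, and `ψ(t,x) → exp(i·a·(p·x)/ħ)` as `t → 0⁺`. -/
theorem driven_oscillator_plane_wave_solution
    (hbar m ω : ℝ) (hhbar : 0 < hbar) (hm : 0 < m) (hω : 0 < ω)
    (d : ℕ) (hd : 1 ≤ d) (p : EuclideanSpace ℝ (Fin d))
    (f : ℝ → EuclideanSpace ℝ (Fin d)) (hf : Continuous f) (a : ℝ)
    (ψ : ℝ → EuclideanSpace ℝ (Fin d) → ℂ)
    (hψ : ∀ (t : ℝ) (x : EuclideanSpace ℝ (Fin d)),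
      ψ t x = ((Real.cos (ω * t) ^ (-(d : ℝ) / 2) : ℝ) : ℂ)
        * Complex.exp (Complex.I *
            (((m * ω / (2 * hbar * Real.sin (ω * t))) *
              (-(1 / Real.cos (ω * t))
                  * ‖x - ((a * Real.sin (ω * t)) / (m * ω)) • p - Ivec m ω f 0 t‖ ^ 2
                + ‖x‖ ^ 2 * Real.cos (ω * t)
                + 2 * (⟪x, Ivec m ω f t 0⟫ : ℝ)
                - 2 * Jval m ω f t 0) : ℝ) : ℂ))) :
    (∀ t ∈ Set.Ioo (0 : ℝ) (Real.pi / (2 * ω)), ∀ x : EuclideanSpace ℝ (Fin d),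
      Complex.I * (hbar : ℂ) * deriv (fun s : ℝ => ψ s x) t
        + ((hbar : ℂ) ^ 2 / (2 * (m : ℂ))) * laplacian (ψ t) x
        - (1 / 2) * (m : ℂ) * (ω : ℂ) ^ 2 * ((‖x‖ ^ 2 : ℝ) : ℂ) * ψ t x
        + ((⟪f t, x⟫ : ℝ) : ℂ) * ψ t x = 0)
    ∧ ∀ x : EuclideanSpace ℝ (Fin d),
        Filter.Tendsto (fun t : ℝ => ψ t x) (nhdsWithin 0 (Set.Ioi 0))
          (nhds (Complex.exp (Complex.I * ((a * (⟪p, x⟫ : ℝ) / hbar : ℝ) : ℂ)))) := by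
  have hpos : ∀ u ∈ Set.Ioo (0 : ℝ) (Real.pi / (2 * ω)),
      0 < Real.sin (ω * u) ∧ 0 < Real.cos (ω * u) := by
    intro u hu
    have h1 : 0 < ω * u := mul_pos hω hu.1
    have h2 : ω * u < Real.pi / 2 := by
      have := hu.2
      rw [lt_div_iff₀ (by positivity)] at this
      linarith
    exact ⟨Real.sin_pos_of_pos_of_lt_pi h1 (by linarith [Real.pi_pos]),
      Real.cos_pos_of_mem_Ioo ⟨by linarith [Real.pi_pos], h2⟩⟩
  have psi_eq : ∀ u : ℝ, Real.sin (ω * u) ≠ 0 → Real.cos (ω * u) ≠ 0 →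
      ∀ y, ψ u y = cleanPsi hbar m ω f a p u y := by
    intro u hsu hcu y
    rw [hψ u y, cleanPsi,
      bracket_eq (hbar := hbar) (m := m) (a := a) (p := p) hf u y hsu hcu
        hm.ne' hω.ne' hhbar.ne']
  constructor
  · intro t ht x
    obtain ⟨hs, hc⟩ := hpos t ht
    -- abbreviations
    set s := Real.sin (ω * t) with hs_def
    set c := Real.cos (ω * t) with hc_def
    set X : ℝ := ‖x‖ ^ 2 with hX
    set P : ℝ := (⟪x, Gv ω f a p t⟫ : ℝ) with hP
    set Q : ℝ := (⟪x, f t⟫ : ℝ) with hQ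
    set NG : ℝ := ‖Gv ω f a p t‖ ^ 2 with hNG
    set α : ℝ := -(m * ω / (2 * hbar)) * (s / c) with hα
    set C : ℝ := c ^ (-(d : ℝ) / 2) with hC
    set AD : ℝ := -(d : ℝ) / 2 * c ^ (-(d : ℝ) / 2 - 1) * (-(ω * s)) with hAD
    set PD : ℝ := -(m * ω ^ 2 / (2 * hbar * c ^ 2)) * X + (ω * s / (hbar * c ^ 2)) * P
      + Q / hbar - NG / (2 * hbar * m * c ^ 2) with hPD
    set EXP : ℂ := Complex.exp (Complex.I * ((phase hbar m ω f a p t x : ℝ) : ℂ)) with hEXP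
    have hpsi_tx : ψ t x = (C : ℂ) * EXP := psi_eq t hs.ne' hc.ne' x
    -- time derivative
    have hderiv : deriv (fun u : ℝ => ψ u x) t = (AD : ℂ) * EXP
        + (C : ℂ) * (Complex.I * (PD : ℝ) * EXP) := by
      have hev : (fun u : ℝ => ψ u x) =ᶠ[nhds t] fun u => cleanPsi hbar m ω f a p u x := by
        filter_upwards [Ioo_mem_nhds ht.1 ht.2] with u hu
        exact psi_eq u (hpos u hu).1.ne' (hpos u hu).2.ne' x
      rw [hev.deriv_eq]
      have hcos := hasDerivAt_cos_omega (ω := ω) t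
      have hpow : HasDerivAt (fun u => Real.cos (ω * u) ^ (-(d : ℝ) / 2)) AD t := by
        have := (Real.hasDerivAt_rpow_const (x := Real.cos (ω * t)) (p := -(d : ℝ) / 2) (Or.inl hc.ne')).comp t hcos
        exact this
      have hph := hasDerivAt_phase (hbar := hbar) (m := m) (a := a) (p := p) hf x t
        hs.ne' hc.ne' hm.ne' hω.ne' hhbar.ne'
      have hexp := ((hph.ofReal_comp.const_mul Complex.I).cexp)
      have htot : HasDerivAt (fun u => ((Real.cos (ω * u) ^ (-(d : ℝ) / 2) : ℝ) : ℂ)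
          * Complex.exp (Complex.I * ((phase hbar m ω f a p u x : ℝ) : ℂ))) _ t :=
        (hpow.ofReal_comp).mul hexp
      have hshape : (fun u => cleanPsi hbar m ω f a p u x) = fun u =>
          ((Real.cos (ω * u) ^ (-(d : ℝ) / 2) : ℝ) : ℂ)
            * Complex.exp (Complex.I * ((phase hbar m ω f a p u x : ℝ) : ℂ)) := by
        funext u; rw [cleanPsi]
      rw [hshape, htot.deriv]
      simp only [← hs_def, ← hc_def, ← hC, ← hX, ← hP, ← hQ, ← hNG, ← hAD]
      rw [hPD, hEXP]
      push_cast
      ring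
    -- laplacian
    have hβx : (⟪x, (1 / (hbar * c)) • Gv ω f a p t⟫ : ℝ) = (1 / (hbar * c)) * P := by
      rw [real_inner_smul_right]
    have hβn : ‖(1 / (hbar * c)) • Gv ω f a p t‖ ^ 2 = (1 / (hbar * c)) ^ 2 * NG := by
      rw [norm_smul, mul_pow, Real.norm_eq_abs, sq_abs]
    set R : ℝ := 4 * α ^ 2 * X + 4 * α * ((1 / (hbar * c)) * P)
      + (1 / (hbar * c)) ^ 2 * NG with hR
    have hlapfun : ψ t = gauss (C : ℂ) α
        (-(1 / (2 * hbar * m * ω)) * (s * NG / c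
          - 2 * ⟪Gv ω f a p t, Sv ω f t⟫ + 2 * Av ω f t))
        ((1 / (hbar * c)) • Gv ω f a p t) := by
      funext y
      rw [psi_eq t hs.ne' hc.ne' y, cleanPsi, gauss]
      rw [show phase hbar m ω f a p t y = α * ‖y‖ ^ 2
          + ⟪y, (1 / (hbar * c)) • Gv ω f a p t⟫
          + -(1 / (2 * hbar * m * ω)) * (s * NG / c
              - 2 * ⟪Gv ω f a p t, Sv ω f t⟫ + 2 * Av ω f t) from by
        rw [phase, real_inner_smul_right, hα, hNG, hs_def, hc_def]; ring]
    have hlap : laplacian (ψ t) x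
        = (2 * Complex.I * (α : ℂ) * (d : ℂ) - (R : ℂ)) * ((C : ℂ) * EXP) := by
      rw [hlapfun, laplacian_gauss, ← hlapfun, hpsi_tx]
      rw [hβx, hβn]
    -- scalar identities
    have hpyth : s ^ 2 + c ^ 2 = 1 := Real.sin_sq_add_cos_sq (ω * t)
    have hCc : c ^ (-(d : ℝ) / 2 - 1) * c = C := by
      have h1 : c ^ ((-(d : ℝ) / 2 - 1) + 1) = c ^ (-(d : ℝ) / 2 - 1) * c ^ (1 : ℝ) :=
        Real.rpow_add hc _ _
      rw [Real.rpow_one] at h1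
      rw [hC, ← h1]
      norm_num
    have him : hbar * AD + hbar ^ 2 / m * α * (d : ℝ) * C = 0 := by
      rw [hAD, hα, ← hCc]
      field_simp
      ring
    have hre : hbar * PD + hbar ^ 2 / (2 * m) * R + m * ω ^ 2 * X / 2 - Q = 0 := by
      rw [hPD, hR, hα]
      field_simp
      ring_nf
      linear_combination (4 * m ^ 2 * ω ^ 2 * ‖x‖ ^ 2) * hpyth
    have himC : (hbar : ℂ) * (AD : ℂ) + (hbar : ℂ) ^ 2 / m * (α : ℂ) * (d : ℂ) * (C : ℂ)
        = 0 := by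
      exact_mod_cast him
    have hreC : (hbar : ℂ) * (PD : ℂ) + (hbar : ℂ) ^ 2 / (2 * m) * (R : ℂ)
        + (m : ℂ) * (ω : ℂ) ^ 2 * (X : ℂ) / 2 - (Q : ℂ) = 0 := by
      exact_mod_cast hre
    have hQQ : ((⟪f t, x⟫ : ℝ) : ℂ) = (Q : ℂ) := by
      rw [hQ, real_inner_comm]
    rw [hderiv, hlap, hpsi_tx, hQQ]
    linear_combination (Complex.I * EXP) * himC - ((C : ℂ) * EXP) * hreC
      + ((hbar : ℂ) * (C : ℂ) * (PD : ℂ) * EXP) * Complex.I_sq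
  · intro x
    have hb : (0 : ℝ) < Real.pi / (2 * ω) := by positivity
    have hev : (fun t : ℝ => ψ t x) =ᶠ[nhdsWithin 0 (Set.Ioi 0)]
        fun t => cleanPsi hbar m ω f a p t x := by
      filter_upwards [Ioo_mem_nhdsGT_of_mem (Set.mem_Ico.2 ⟨le_refl 0, hb⟩)] with u hu
      exact psi_eq u (hpos u hu).1.ne' (hpos u hu).2.ne' x
    rw [Filter.tendsto_congr' hev]
    have hcont : ContinuousAt (fun t => cleanPsi hbar m ω f a p t x) 0 := by
      have hccos : Continuous fun t : ℝ => Real.cos (ω * t) := by fun_prop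
      have hcsin : Continuous fun t : ℝ => Real.sin (ω * t) := by fun_prop
      have hcos0 : Real.cos (ω * 0) = 1 := by simp
      have hG : Continuous (Gv ω f a p) := by
        have : Continuous (Fv ω f) := continuous_primitive' (cont_cosf hf)
        have hGfun : (Gv ω f a p) = fun u => a • p + Fv ω f u := by funext u; rw [Gv]
        rw [hGfun]; exact continuous_const.add this
      have hS : Continuous (Sv ω f) := continuous_Sv hf
      have hA : Continuous (Av ω f) := continuous_primitive' (cont_Aint hf)
      have hphc : ContinuousAt (fun t => phase hbar m ω f a p t x) 0 := by
        have h1 : ContinuousAt (fun t : ℝ =>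
            -(m * ω / (2 * hbar)) * (Real.sin (ω * t) / Real.cos (ω * t)) * ‖x‖ ^ 2) 0 := by
          apply ContinuousAt.mul _ continuousAt_const
          apply ContinuousAt.mul continuousAt_const
          exact hcsin.continuousAt.div hccos.continuousAt (by rw [hcos0]; norm_num)
        have h2 : ContinuousAt (fun t : ℝ =>
            1 / (hbar * Real.cos (ω * t)) * ⟪x, Gv ω f a p t⟫) 0 := by
          apply ContinuousAt.mul
          · exact continuousAt_const.div ((continuous_const.mul hccos).continuousAt)
              (by simp [hcos0, hhbar.ne'])
          · exact (continuous_const.inner hG).continuousAt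
        have h3 : ContinuousAt (fun t : ℝ => 1 / (2 * hbar * m * ω) *
            (Real.sin (ω * t) * ‖Gv ω f a p t‖ ^ 2 / Real.cos (ω * t)
              - 2 * ⟪Gv ω f a p t, Sv ω f t⟫ + 2 * Av ω f t)) 0 := by
          apply ContinuousAt.mul continuousAt_const
          apply ContinuousAt.add
          · apply ContinuousAt.sub
            · exact ((hcsin.mul (hG.norm.pow 2)).continuousAt).div hccos.continuousAt
                (by rw [hcos0]; norm_num)
            · exact (continuous_const.mul (hG.inner hS)).continuousAt
          · exact (continuous_const.mul hA).continuousAt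
        have : (fun t => phase hbar m ω f a p t x) = fun t =>
            -(m * ω / (2 * hbar)) * (Real.sin (ω * t) / Real.cos (ω * t)) * ‖x‖ ^ 2
            + 1 / (hbar * Real.cos (ω * t)) * ⟪x, Gv ω f a p t⟫
            - 1 / (2 * hbar * m * ω) *
                (Real.sin (ω * t) * ‖Gv ω f a p t‖ ^ 2 / Real.cos (ω * t)
                  - 2 * ⟪Gv ω f a p t, Sv ω f t⟫ + 2 * Av ω f t) := by
          funext u; rw [phase]
        rw [this]
        exact (h1.add h2).sub h3
      have hrp : ContinuousAt (fun t : ℝ => Real.cos (ω * t) ^ (-(d : ℝ) / 2)) 0 :=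
        hccos.continuousAt.rpow_const (Or.inl (by simp))
      have hshape : (fun t => cleanPsi hbar m ω f a p t x) = fun t =>
          ((Real.cos (ω * t) ^ (-(d : ℝ) / 2) : ℝ) : ℂ)
            * Complex.exp (Complex.I * ((phase hbar m ω f a p t x : ℝ) : ℂ)) := by
        funext u; rw [cleanPsi]
      rw [hshape]
      exact (Complex.continuous_ofReal.continuousAt.comp hrp).mul
        ((continuousAt_const.mul
          (Complex.continuous_ofReal.continuousAt.comp hphc)).cexp)
    have hval : cleanPsi hbar m ω f a p 0 x
        = Complex.exp (Complex.I * ((a * (⟪p, x⟫ : ℝ) / hbar : ℝ) : ℂ)) := by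
      rw [cleanPsi, phase, Gv]
      simp only [mul_zero, Real.cos_zero, Real.sin_zero, Real.one_rpow, Fv, Sv, Av,
        intervalIntegral.integral_same, add_zero, inner_zero_right, zero_div, zero_mul,
        mul_zero, sub_zero, zero_add, real_inner_smul_right]
      rw [real_inner_comm x p]
      push_cast
      norm_num
      ring_nf
    have := hcont.tendsto
    rw [hval] at this
    exact this.mono_left nhdsWithin_le_nhds
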